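/- In the girth-4 setting: T₀ is an independent set of G; consequently, every neighbor of every vertex of T₀ belongs to T₂. -/

import Mathlib

/-- The adjacency matrix of a simple graph over `ℝ` is Hermitian. -/
lemma adjMatrix_isHermitian {V : Type*} [Fintype V] (G : SimpleGraph V)
    [DecidableRel G.Adj] : ((G.adjMatrix ℝ)).IsHermitian := by
  rw [Matrix.IsHermitian, Matrix.conjTranspose_eq_transpose_of_trivial]
  exact G.isSymm_adjMatrix

/-- The number of eigenvalues (counted with multiplicity) of the real adjacency matrix of `G`
satisfying the predicate `p`. -/
noncomputable def eigCount {V : Type*} [Fintype V] [DecidableEq V]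
    (G : SimpleGraph V) (p : ℝ → Prop) : ℕ := by
  classical
  exact (Finset.univ.filter fun i =>
    p ((adjMatrix_isHermitian G).eigenvalues i)).card
/-- `HasMinor G H` : `H` is a minor of `G`, witnessed by a family of pairwise disjoint
nonempty branch sets, each inducing a connected subgraph of `G`, such that every edge of `H`
is realized by an edge of `G` between the corresponding branch sets. -/
def HasMinor {V : Type*} {W : Type*} (G : SimpleGraph V) (H : SimpleGraph W) : Prop :=
  ∃ B : W → Set V,
    (∀ w, (B w).Nonempty) ∧
    (Pairwise fun w₁ w₂ => Disjoint (B w₁) (B w₂)) ∧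
    (∀ w, (G.induce (B w)).Connected) ∧
    (∀ ⦃w₁ w₂⦄, H.Adj w₁ w₂ → ∃ a ∈ B w₁, ∃ b ∈ B w₂, G.Adj a b)

/-- `G` is planar in the sense of Wagner: it has neither `K₅` nor `K_{3,3}` as a minor. -/
def WagnerPlanar {V : Type*} (G : SimpleGraph V) : Prop :=
  ¬ HasMinor G (⊤ : SimpleGraph (Fin 5)) ∧
    ¬ HasMinor G (completeBipartiteGraph (Fin 3) (Fin 3))
/-- For a 4-cycle `x₀x₁x₂x₃x₀` in `G` and `S ⊆ Fin 4`, the set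
`T_S = {v ∉ {x₀,x₁,x₂,x₃} : N(v) ∩ {x₀,x₁,x₂,x₃} = {x i : i ∈ S}}`. -/
def TS {V : Type*} (G : SimpleGraph V) (x : Fin 4 → V) (S : Set (Fin 4)) : Set V :=
  {v | v ∉ Set.range x ∧ ∀ i, G.Adj v (x i) ↔ i ∈ S}

/-- The set `T_j` of vertices outside the 4-cycle having exactly `j` neighbors among
`{x₀,x₁,x₂,x₃}`. -/
def Tdeg {V : Type*} (G : SimpleGraph V) (x : Fin 4 → V) (j : ℕ) : Set V :=
  {v | v ∉ Set.range x ∧ {i : Fin 4 | G.Adj v (x i)}.ncard = j}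

open Matrix in
lemma dotProduct_sum' {n ι : Type*} [Fintype n] (s : Finset ι) (u : n → ℝ) (f : ι → n → ℝ) :
    u ⬝ᵥ (∑ i ∈ s, f i) = ∑ i ∈ s, u ⬝ᵥ f i := by
  simp only [dotProduct, Finset.sum_apply, Finset.mul_sum]
  rw [Finset.sum_comm]

open Matrix in
lemma sum_dotProduct' {n ι : Type*} [Fintype n] (s : Finset ι) (u : n → ℝ) (f : ι → n → ℝ) :
    (∑ i ∈ s, f i) ⬝ᵥ u = ∑ i ∈ s, f i ⬝ᵥ u := by
  simp only [dotProduct, Finset.sum_apply, Finset.sum_mul]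
  rw [Finset.sum_comm]

open Matrix in
lemma card_two_of_quad {n : Type*} [Fintype n] [DecidableEq n] (A : Matrix n n ℝ)
    (hA : A.IsHermitian) (y z : n → ℝ)
    (h : ∀ α β : ℝ, ¬(α = 0 ∧ β = 0) →
      (α • y + β • z) ⬝ᵥ (α • y + β • z) < (α • y + β • z) ⬝ᵥ (A.mulVec (α • y + β • z))) :
    ∃ i j, i ≠ j ∧ 1 < hA.eigenvalues i ∧ 1 < hA.eigenvalues j := by
  classical
  by_contra hex
  push_neg at hex
  set F := (Finset.univ.filter fun i => 1 < hA.eigenvalues i) with hF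
  have hcard : F.card ≤ 1 := by
    refine Finset.card_le_one.mpr fun a ha b hb => ?_
    by_contra hne
    exact absurd (hex a b hne (Finset.mem_filter.mp ha).2) (not_le.mpr (Finset.mem_filter.mp hb).2)
  set b := hA.eigenvectorBasis with hb
  have hdot : ∀ u v : n → ℝ, u ⬝ᵥ v = (inner (𝕜 := ℝ) (E := EuclideanSpace ℝ n) (WithLp.toLp 2 u) (WithLp.toLp 2 v) : ℝ) := by
    intro u v
    simp [dotProduct, PiLp.inner_apply, RCLike.inner_apply, conj_trivial, mul_comm]
  obtain ⟨α, β, hne, hker⟩ : ∃ α β : ℝ, ¬(α = 0 ∧ β = 0) ∧ ∀ i ∈ F,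
      α * (inner (𝕜 := ℝ) (b i) (WithLp.toLp 2 y : EuclideanSpace ℝ n) : ℝ)
      + β * (inner (𝕜 := ℝ) (b i) (WithLp.toLp 2 z : EuclideanSpace ℝ n) : ℝ) = 0 := by
    rcases Finset.eq_empty_or_nonempty F with hFe | ⟨e, he⟩
    · exact ⟨1, 0, by norm_num, by simp [hFe]⟩
    · have hFs : ∀ i ∈ F, i = e := fun i hi => Finset.card_le_one.mp hcard i hi e he
      set cy : ℝ := inner (𝕜 := ℝ) (b e) (WithLp.toLp 2 y : EuclideanSpace ℝ n) with hcy
      set cz : ℝ := inner (𝕜 := ℝ) (b e) (WithLp.toLp 2 z : EuclideanSpace ℝ n) with hcz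
      by_cases h0 : cy = 0 ∧ cz = 0
      · exact ⟨1, 0, by norm_num, fun i hi => by rw [hFs i hi]; rw [← hcy, ← hcz]; simp [h0.1]⟩
      · refine ⟨cz, -cy, fun hc => h0 ⟨by simpa using hc.2, hc.1⟩, fun i hi => by
          rw [hFs i hi, ← hcy, ← hcz]; ring⟩
  set w : n → ℝ := α • y + β • z with hw
  set c : n → ℝ := fun i => inner (𝕜 := ℝ) (b i) (WithLp.toLp 2 w : EuclideanSpace ℝ n) with hc
  have hcval : ∀ i, c i = α * (inner (𝕜 := ℝ) (b i) (WithLp.toLp 2 y : EuclideanSpace ℝ n) : ℝ)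
      + β * (inner (𝕜 := ℝ) (b i) (WithLp.toLp 2 z : EuclideanSpace ℝ n) : ℝ) := by
    intro i
    show (inner (𝕜 := ℝ) (b i) (WithLp.toLp 2 (α • y + β • z : n → ℝ) : EuclideanSpace ℝ n) : ℝ) = _
    rw [WithLp.toLp_add, WithLp.toLp_smul, WithLp.toLp_smul, inner_add_right, inner_smul_right, inner_smul_right]
  have hrepr : (∑ i, c i • (b i : EuclideanSpace ℝ n)).ofLp = w :=
    congrArg WithLp.ofLp (b.sum_repr' (WithLp.toLp 2 w))
  have hrepr2 : ∑ i, c i • ((b i : EuclideanSpace ℝ n) : n → ℝ) = w := by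
    rw [← hrepr, WithLp.ofLp_sum]; simp only [WithLp.ofLp_smul]
  have hAw : A.mulVec w = ∑ i, (c i * hA.eigenvalues i) • ((b i : EuclideanSpace ℝ n) : n → ℝ) := by
    conv_lhs => rw [← hrepr]
    rw [show (∑ i, c i • (b i : EuclideanSpace ℝ n)) = ∑ i, c i • ((b i : EuclideanSpace ℝ n) : n → ℝ) from by
      rw [WithLp.ofLp_sum]; simp only [WithLp.ofLp_smul]]
    rw [show A *ᵥ (∑ i, c i • ((b i : EuclideanSpace ℝ n) : n → ℝ))
        = A.mulVecLin (∑ i, c i • ((b i : EuclideanSpace ℝ n) : n → ℝ)) from rfl, map_sum]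
    refine Finset.sum_congr rfl fun i _ => ?_
    rw [_root_.map_smul, Matrix.mulVecLin_apply]
    rw [show A *ᵥ ((b i : EuclideanSpace ℝ n) : n → ℝ)
        = hA.eigenvalues i • ((b i : EuclideanSpace ℝ n) : n → ℝ) from hA.mulVec_eigenvectorBasis i]
    rw [smul_smul, mul_comm]
  have hQ : w ⬝ᵥ (A.mulVec w) = ∑ i, (c i * hA.eigenvalues i) * c i := by
    rw [hAw, dotProduct_sum']
    refine Finset.sum_congr rfl fun i _ => ?_
    rw [dotProduct_smul, smul_eq_mul]
    congr 1
  have hN : w ⬝ᵥ w = ∑ i, c i * c i := by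
    conv_lhs => rw [show (w : n → ℝ) = ((∑ i, c i • (b i : EuclideanSpace ℝ n)) : n → ℝ) from hrepr2.symm]
    rw [sum_dotProduct']
    refine Finset.sum_congr rfl fun i _ => ?_
    rw [smul_dotProduct, smul_eq_mul]
    congr 1
    rw [hdot, hrepr2]
  have hle : ∑ i, (c i * hA.eigenvalues i) * c i ≤ ∑ i, c i * c i := by
    refine Finset.sum_le_sum fun i _ => ?_
    by_cases hi : i ∈ F
    · have : c i = 0 := by rw [hcval i]; exact hker i hi
      simp [this]
    · have hμ : hA.eigenvalues i ≤ 1 := by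
        by_contra hgt
        exact hi (by rw [hF]; exact Finset.mem_filter.mpr ⟨Finset.mem_univ i, lt_of_not_ge hgt⟩)
      nlinarith [sq_nonneg (c i)]
  have := h α β hne
  rw [← hw] at this
  rw [hQ, hN] at this
  linarith

open Matrix in
lemma dot_eq_sum_support {V : Type*} [Fintype V] (L : Finset V) (f g : V → ℝ)
    (hf : ∀ s ∉ L, f s = 0) : f ⬝ᵥ g = ∑ s ∈ L, f s * g s := by
  rw [dotProduct]
  exact (Finset.sum_subset L.subset_univ (fun s _ hs => by rw [hf s hs, zero_mul])).symm

open Matrix in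
lemma dot_eq_sum_support' {V : Type*} [Fintype V] (L : Finset V) (f g : V → ℝ)
    (hg : ∀ s ∉ L, g s = 0) : f ⬝ᵥ g = ∑ s ∈ L, f s * g s := by
  rw [dotProduct]
  exact (Finset.sum_subset L.subset_univ (fun s _ hs => by rw [hg s hs, mul_zero])).symm

open Matrix in
lemma pendant_spec {V : Type*} [Fintype V] [DecidableEq V] (G : SimpleGraph V)
    [DecidableRel G.Adj]
    (c0 c1 c2 c3 u v : V)
    (d01 : c0 ≠ c1) (d02 : c0 ≠ c2) (d03 : c0 ≠ c3) (d12 : c1 ≠ c2) (d13 : c1 ≠ c3)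
    (d23 : c2 ≠ c3)
    (d0u : c0 ≠ u) (d1u : c1 ≠ u) (d2u : c2 ≠ u) (d3u : c3 ≠ u)
    (d0v : c0 ≠ v) (d1v : c1 ≠ v) (d2v : c2 ≠ v) (d3v : c3 ≠ v) (duv : u ≠ v)
    (h01 : G.Adj c0 c1) (h12 : G.Adj c1 c2) (h23 : G.Adj c2 c3) (h30 : G.Adj c3 c0)
    (h0u : G.Adj c0 u) (huv : G.Adj u v)
    (n02 : ¬ G.Adj c0 c2) (n13 : ¬ G.Adj c1 c3)
    (n1u : ¬ G.Adj c1 u) (n2u : ¬ G.Adj c2 u) (n3u : ¬ G.Adj c3 u)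
    (n0v : ¬ G.Adj c0 v) (n1v : ¬ G.Adj c1 v) (n2v : ¬ G.Adj c2 v) (n3v : ¬ G.Adj c3 v)
    (hA : (G.adjMatrix ℝ).IsHermitian) :
    ∃ i j, i ≠ j ∧ 1 < hA.eigenvalues i ∧ 1 < hA.eigenvalues j := by
  set y : V → ℝ := fun s => if s = c0 then 4 else if s = c1 then 3 else if s = c2 then 3
    else if s = c3 then 3 else if s = u then 2 else if s = v then 1 else 0 with hy
  set z : V → ℝ := fun s => if s = c0 then 1 else if s = c1 then -2 else if s = c2 then -3
    else if s = c3 then -2 else if s = u then 4 else if s = v then 4 else 0 with hz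
  apply card_two_of_quad (G.adjMatrix ℝ) hA y z
  intro α β hne
  set L : Finset V := {c0, c1, c2, c3, u, v} with hL
  have hsupp : ∀ s ∉ L, (α • y + β • z) s = 0 := by
    intro s hs
    simp only [hL, Finset.mem_insert, Finset.mem_singleton, not_or] at hs
    obtain ⟨e0, e1, e2, e3, e4, e5⟩ := hs
    simp [hy, hz, e0, e1, e2, e3, e4, e5]
  rw [dot_eq_sum_support L _ _ hsupp, dot_eq_sum_support L _ _ hsupp]
  have hmv : ∀ s, (Matrix.mulVec (G.adjMatrix ℝ) (α • y + β • z)) s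
      = ∑ t ∈ L, (G.adjMatrix ℝ) s t * (α • y + β • z) t := fun s =>
    dot_eq_sum_support' L _ _ hsupp
  simp only [hmv]
  have s01 := h01.symm; have s12 := h12.symm; have s23 := h23.symm; have s30 := h30.symm
  have s0u := h0u.symm; have suv := huv.symm
  have m02 : ¬ G.Adj c2 c0 := fun h => n02 h.symm
  have m13 : ¬ G.Adj c3 c1 := fun h => n13 h.symm
  have m1u : ¬ G.Adj u c1 := fun h => n1u h.symm
  have m2u : ¬ G.Adj u c2 := fun h => n2u h.symm
  have m3u : ¬ G.Adj u c3 := fun h => n3u h.symm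
  have m0v : ¬ G.Adj v c0 := fun h => n0v h.symm
  have m1v : ¬ G.Adj v c1 := fun h => n1v h.symm
  have m2v : ¬ G.Adj v c2 := fun h => n2v h.symm
  have m3v : ¬ G.Adj v c3 := fun h => n3v h.symm
  simp only [hL, Finset.sum_insert, Finset.mem_insert, Finset.mem_singleton,
    Finset.sum_singleton, not_or]
  simp [hy, hz, d01, d02, d03, d12, d13, d23, d0u, d1u, d2u, d3u, d0v, d1v, d2v, d3v, duv,
    d01.symm, d02.symm, d03.symm, d12.symm, d13.symm, d23.symm, d0u.symm, d1u.symm, d2u.symm,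
    d3u.symm, d0v.symm, d1v.symm, d2v.symm, d3v.symm, duv.symm,
    h01, h12, h23, h30, h0u, huv, s01, s12, s23, s30, s0u, suv,
    n02, n13, n1u, n2u, n3u, n0v, n1v, n2v, n3v, m02, m13, m1u, m2u, m3u, m0v, m1v, m2v, m3v,
    SimpleGraph.irrefl]
  rcases (by tauto : α ≠ 0 ∨ β ≠ 0) with hα | hβ
  · nlinarith [sq_nonneg (5*α - β), sq_nonneg β, mul_self_pos.mpr hα]
  · nlinarith [sq_nonneg (5*α - β), sq_nonneg α, mul_self_pos.mpr hβ]

open Matrix in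
lemma t0_indep_spec {V : Type*} [Fintype V] [DecidableEq V] (G : SimpleGraph V)
    [DecidableRel G.Adj]
    (c0 c1 c2 c3 a b w : V)
    (d01 : c0 ≠ c1) (d02 : c0 ≠ c2) (d03 : c0 ≠ c3) (d12 : c1 ≠ c2) (d13 : c1 ≠ c3)
    (d23 : c2 ≠ c3)
    (d0a : c0 ≠ a) (d1a : c1 ≠ a) (d2a : c2 ≠ a) (d3a : c3 ≠ a)
    (d0b : c0 ≠ b) (d1b : c1 ≠ b) (d2b : c2 ≠ b) (d3b : c3 ≠ b)
    (d0w : c0 ≠ w) (d1w : c1 ≠ w) (d2w : c2 ≠ w) (d3w : c3 ≠ w)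
    (dab : a ≠ b) (daw : a ≠ w) (dbw : b ≠ w)
    (h01 : G.Adj c0 c1) (h12 : G.Adj c1 c2) (h23 : G.Adj c2 c3) (h30 : G.Adj c3 c0)
    (hab : G.Adj a b) (hbw : G.Adj b w)
    (n02 : ¬ G.Adj c0 c2) (n13 : ¬ G.Adj c1 c3) (naw : ¬ G.Adj a w)
    (n0a : ¬ G.Adj c0 a) (n1a : ¬ G.Adj c1 a) (n2a : ¬ G.Adj c2 a) (n3a : ¬ G.Adj c3 a)
    (n0b : ¬ G.Adj c0 b) (n1b : ¬ G.Adj c1 b) (n2b : ¬ G.Adj c2 b) (n3b : ¬ G.Adj c3 b)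
    (hw01 : ¬ (G.Adj w c0 ∧ G.Adj w c1)) (hw23 : ¬ (G.Adj w c2 ∧ G.Adj w c3))
    (hA : (G.adjMatrix ℝ).IsHermitian) :
    ∃ i j, i ≠ j ∧ 1 < hA.eigenvalues i ∧ 1 < hA.eigenvalues j := by
  set y : V → ℝ := fun s => if s = c0 then 1 else if s = c1 then 1 else if s = c2 then 1
    else if s = c3 then 1 else if s = a then 0 else if s = b then 0 else if s = w then 0
    else 0 with hy
  set z : V → ℝ := fun s => if s = c0 then 0 else if s = c1 then 0 else if s = c2 then 0
    else if s = c3 then 0 else if s = a then 2 else if s = b then 3 else if s = w then 2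
    else 0 with hz
  apply card_two_of_quad (G.adjMatrix ℝ) hA y z
  intro α β hne
  set L : Finset V := {c0, c1, c2, c3, a, b, w} with hL
  have hsupp : ∀ s ∉ L, (α • y + β • z) s = 0 := by
    intro s hs
    simp only [hL, Finset.mem_insert, Finset.mem_singleton, not_or] at hs
    obtain ⟨e0, e1, e2, e3, e4, e5, e6⟩ := hs
    simp [hy, hz, e0, e1, e2, e3, e4, e5, e6]
  rw [dot_eq_sum_support L _ _ hsupp, dot_eq_sum_support L _ _ hsupp]
  have hmv : ∀ s, (Matrix.mulVec (G.adjMatrix ℝ) (α • y + β • z)) s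
      = ∑ t ∈ L, (G.adjMatrix ℝ) s t * (α • y + β • z) t := fun s =>
    dot_eq_sum_support' L _ _ hsupp
  simp only [hmv]
  have s01 := h01.symm; have s12 := h12.symm; have s23 := h23.symm; have s30 := h30.symm
  have sab := hab.symm; have sbw := hbw.symm
  have m02 : ¬ G.Adj c2 c0 := fun h => n02 h.symm
  have m13 : ¬ G.Adj c3 c1 := fun h => n13 h.symm
  have maw : ¬ G.Adj w a := fun h => naw h.symm
  have m0a : ¬ G.Adj a c0 := fun h => n0a h.symm
  have m1a : ¬ G.Adj a c1 := fun h => n1a h.symm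
  have m2a : ¬ G.Adj a c2 := fun h => n2a h.symm
  have m3a : ¬ G.Adj a c3 := fun h => n3a h.symm
  have m0b : ¬ G.Adj b c0 := fun h => n0b h.symm
  have m1b : ¬ G.Adj b c1 := fun h => n1b h.symm
  have m2b : ¬ G.Adj b c2 := fun h => n2b h.symm
  have m3b : ¬ G.Adj b c3 := fun h => n3b h.symm
  have r1 : ∀ (c : V) (t : ℝ), (if G.Adj c w then t else 0)
      = (if G.Adj w c then (1:ℝ) else 0) * t := by
    intro c t
    by_cases h : G.Adj w c
    · rw [if_pos h.symm, if_pos h, one_mul]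
    · rw [if_neg (fun hh => h hh.symm), if_neg h, zero_mul]
  have r2 : ∀ (c : V) (t : ℝ), (if G.Adj w c then t else 0)
      = (if G.Adj w c then (1:ℝ) else 0) * t := by
    intro c t
    by_cases h : G.Adj w c
    · rw [if_pos h, if_pos h, one_mul]
    · rw [if_neg h, if_neg h, zero_mul]
  simp only [hL, Finset.sum_insert, Finset.mem_insert, Finset.mem_singleton,
    Finset.sum_singleton, not_or]
  simp [hy, hz, d01, d02, d03, d12, d13, d23, d0a, d1a, d2a, d3a, d0b, d1b, d2b, d3b,
    d0w, d1w, d2w, d3w, dab, daw, dbw,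
    d01.symm, d02.symm, d03.symm, d12.symm, d13.symm, d23.symm, d0a.symm, d1a.symm, d2a.symm,
    d3a.symm, d0b.symm, d1b.symm, d2b.symm, d3b.symm, d0w.symm, d1w.symm, d2w.symm, d3w.symm,
    dab.symm, daw.symm, dbw.symm,
    h01, h12, h23, h30, hab, hbw, s01, s12, s23, s30, sab, sbw,
    n02, n13, naw, m02, m13, maw, n0a, n1a, n2a, n3a, n0b, n1b, n2b, n3b,
    m0a, m1a, m2a, m3a, m0b, m1b, m2b, m3b, SimpleGraph.irrefl]
  rw [r1 c0 (β*2), r1 c1 (β*2), r1 c2 (β*2), r1 c3 (β*2),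
    r2 c0 α, r2 c1 α, r2 c2 α, r2 c3 α]
  set e0 : ℝ := if G.Adj w c0 then (1:ℝ) else 0 with he0
  set e1 : ℝ := if G.Adj w c1 then (1:ℝ) else 0 with he1
  set e2 : ℝ := if G.Adj w c2 then (1:ℝ) else 0 with he2
  set e3 : ℝ := if G.Adj w c3 then (1:ℝ) else 0 with he3
  have hb0 : 0 ≤ e0 := by rw [he0]; positivity
  have hb1 : 0 ≤ e1 := by rw [he1]; positivity
  have hb2 : 0 ≤ e2 := by rw [he2]; positivity
  have hb3 : 0 ≤ e3 := by rw [he3]; positivity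
  have hc01 : e0 + e1 ≤ 1 := by
    rw [he0, he1]
    by_cases p0 : G.Adj w c0
    · rw [if_pos p0, if_neg (fun p1 => hw01 ⟨p0, p1⟩)]; norm_num
    · rw [if_neg p0]; split_ifs <;> norm_num
  have hc23 : e2 + e3 ≤ 1 := by
    rw [he2, he3]
    by_cases p2 : G.Adj w c2
    · rw [if_pos p2, if_neg (fun p3 => hw23 ⟨p2, p3⟩)]; norm_num
    · rw [if_neg p2]; split_ifs <;> norm_num
  have hE2 : e0 + e1 + e2 + e3 ≤ 2 := by linarith
  have hE0 : 0 ≤ e0 + e1 + e2 + e3 := by linarith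
  rcases (by tauto : α ≠ 0 ∨ β ≠ 0) with hα | hβ
  · rcases eq_or_ne β 0 with hβ0 | hβ0
    · subst hβ0
      nlinarith [mul_self_pos.mpr hα]
    · nlinarith [mul_nonneg (by linarith : (0:ℝ) ≤ 2 - (e0+e1+e2+e3)) (sq_nonneg α),
        mul_nonneg hE0 (sq_nonneg (α+β)),
        mul_pos (by linarith : (0:ℝ) < 7 - 2*(e0+e1+e2+e3)) (mul_self_pos.mpr hβ0)]
  · nlinarith [mul_nonneg (by linarith : (0:ℝ) ≤ 2 - (e0+e1+e2+e3)) (sq_nonneg α),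
      mul_nonneg hE0 (sq_nonneg (α+β)),
      mul_pos (by linarith : (0:ℝ) < 7 - 2*(e0+e1+e2+e3)) (mul_self_pos.mpr hβ)]

/-- in the girth-4 setting, `T₀` is an independent set of `G`; consequently
every neighbor of every vertex of `T₀` belongs to `T₂`. -/
theorem girth_four_T0_independent {V : Type*} [Fintype V] [DecidableEq V] (G : SimpleGraph V)
    (hconn : G.Connected) (htf : G.CliqueFree 3)
    (hl : eigCount G (fun t => 1 < t) ≤ 1) (hplanar : WagnerPlanar G)
    (hgirth : G.egirth = 4) (x : Fin 4 → V) (hinj : Function.Injective x)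
    (hcyc : ∀ i, G.Adj (x i) (x (i + 1))) :
    (∀ u ∈ Tdeg G x 0, ∀ v ∈ Tdeg G x 0, ¬ G.Adj u v) ∧
    (∀ v ∈ Tdeg G x 0, ∀ u : V, G.Adj v u → u ∈ Tdeg G x 2) := by
  classical
  have htri : ∀ p q r : V, G.Adj p q → G.Adj p r → G.Adj q r → False := by
    intro p q r hpq hpr hqr
    exact htf {p, q, r} (SimpleGraph.is3Clique_triple_iff.mpr ⟨hpq, hpr, hqr⟩)
  have h01 : G.Adj (x 0) (x 1) := hcyc 0
  have h12 : G.Adj (x 1) (x 2) := hcyc 1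
  have h23 : G.Adj (x 2) (x 3) := hcyc 2
  have h30 : G.Adj (x 3) (x 0) := hcyc 3
  have n02 : ¬ G.Adj (x 0) (x 2) := fun h => htri _ _ _ h01 h h12
  have n13 : ¬ G.Adj (x 1) (x 3) := fun h => htri _ _ _ h12 h h23
  have m20 : ¬ G.Adj (x 2) (x 0) := fun h => n02 h.symm
  have m31 : ¬ G.Adj (x 3) (x 1) := fun h => n13 h.symm
  have dx : ∀ i j : Fin 4, i ≠ j → x i ≠ x j := fun i j hij h => hij (hinj h)
  have bridge : ¬ (∃ i j, i ≠ j ∧ 1 < (adjMatrix_isHermitian G).eigenvalues i ∧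
      1 < (adjMatrix_isHermitian G).eigenvalues j) := by
    rintro ⟨i, j, hij, hi, hj⟩
    unfold eigCount at hl
    refine absurd hl (not_le.mpr ?_)
    calc 1 < ({i, j} : Finset V).card := by rw [Finset.card_pair hij]; norm_num
      _ ≤ _ := Finset.card_le_card (by
          intro k hk
          simp only [Finset.mem_insert, Finset.mem_singleton] at hk
          rcases hk with rfl | rfl
          · exact Finset.mem_filter.mpr ⟨Finset.mem_univ _, hi⟩
          · exact Finset.mem_filter.mpr ⟨Finset.mem_univ _, hj⟩)
  have hT0 : ∀ p : V, p ∈ Tdeg G x 0 → (p ∉ Set.range x ∧ ∀ i, ¬ G.Adj p (x i)) := by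
    intro p hp
    obtain ⟨hpr, hc⟩ := hp
    refine ⟨hpr, fun i hi => ?_⟩
    have he : {i : Fin 4 | G.Adj p (x i)} = ∅ := (Set.ncard_eq_zero (Set.toFinite _)).mp hc
    rw [Set.eq_empty_iff_forall_notMem] at he
    exact he i hi
  have part1 : ∀ u ∈ Tdeg G x 0, ∀ v ∈ Tdeg G x 0, ¬ G.Adj u v := by
    intro u hu v hv hadj
    obtain ⟨hur, hua⟩ := hT0 u hu
    obtain ⟨hvr, hva⟩ := hT0 v hv
    obtain ⟨p⟩ := hconn.preconnected u (x 0)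
    have hx0S : (x 0) ∉ ({u, v} : Set V) := by
      rintro (h | h)
      · exact hur ⟨0, h⟩
      · exact hvr ⟨0, h⟩
    obtain ⟨d, _, hdf, hds⟩ := p.exists_boundary_dart {u, v} (by left; rfl) hx0S
    have hdadj : G.Adj d.fst d.snd := d.adj
    have hwu : d.snd ≠ u := fun h => hds (h ▸ Or.inl rfl)
    have hwv : d.snd ≠ v := fun h => hds (h ▸ Or.inr rfl)
    have hwR : d.snd ∉ Set.range x := by
      rintro ⟨i, hi⟩
      rcases hdf with h | h
      · exact hua i (by rw [← h, hi]; exact hdadj)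
      · exact hva i (by rw [← h, hi]; exact hdadj)
    have hw01 : ¬ (G.Adj d.snd (x 0) ∧ G.Adj d.snd (x 1)) := fun ⟨hp, hq⟩ => htri _ _ _ hp hq h01
    have hw23 : ¬ (G.Adj d.snd (x 2) ∧ G.Adj d.snd (x 3)) := fun ⟨hp, hq⟩ => htri _ _ _ hp hq h23
    have hnux : ∀ i, x i ≠ u := fun i h => hur ⟨i, h⟩
    have hnvx : ∀ i, x i ≠ v := fun i h => hvr ⟨i, h⟩
    have hnwx : ∀ i, x i ≠ d.snd := fun i h => hwR ⟨i, h⟩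
    have hnua : ∀ i, ¬ G.Adj (x i) u := fun i h => hua i h.symm
    have hnva : ∀ i, ¬ G.Adj (x i) v := fun i h => hva i h.symm
    rcases hdf with hfu | hfv
    · -- d.fst = u : take a := v, b := u, w := d.snd
      have hbw : G.Adj u d.snd := by rw [← hfu]; exact hdadj
      have naw : ¬ G.Adj v d.snd := fun h => htri v u d.snd hadj.symm h hbw
      exact bridge (t0_indep_spec G (x 0) (x 1) (x 2) (x 3) v u d.snd
        (dx 0 1 (by decide)) (dx 0 2 (by decide)) (dx 0 3 (by decide))
        (dx 1 2 (by decide)) (dx 1 3 (by decide)) (dx 2 3 (by decide))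
        (hnvx 0) (hnvx 1) (hnvx 2) (hnvx 3)
        (hnux 0) (hnux 1) (hnux 2) (hnux 3)
        (hnwx 0) (hnwx 1) (hnwx 2) (hnwx 3)
        (fun h => hadj.ne h.symm) (hwv.symm ∘ Eq.symm ∘ Eq.symm) hwu.symm
        h01 h12 h23 h30 hadj.symm hbw
        n02 n13 naw
        (hnva 0) (hnva 1) (hnva 2) (hnva 3)
        (hnua 0) (hnua 1) (hnua 2) (hnua 3)
        hw01 hw23 (adjMatrix_isHermitian G))
    · -- d.fst = v : take a := u, b := v, w := d.snd
      have hbw : G.Adj v d.snd := by rw [← hfv]; exact hdadj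
      have naw : ¬ G.Adj u d.snd := fun h => htri u v d.snd hadj h hbw
      exact bridge (t0_indep_spec G (x 0) (x 1) (x 2) (x 3) u v d.snd
        (dx 0 1 (by decide)) (dx 0 2 (by decide)) (dx 0 3 (by decide))
        (dx 1 2 (by decide)) (dx 1 3 (by decide)) (dx 2 3 (by decide))
        (hnux 0) (hnux 1) (hnux 2) (hnux 3)
        (hnvx 0) (hnvx 1) (hnvx 2) (hnvx 3)
        (hnwx 0) (hnwx 1) (hnwx 2) (hnwx 3)
        hadj.ne hwu.symm hwv.symm
        h01 h12 h23 h30 hadj hbw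
        n02 n13 naw
        (hnua 0) (hnua 1) (hnua 2) (hnua 3)
        (hnva 0) (hnva 1) (hnva 2) (hnva 3)
        hw01 hw23 (adjMatrix_isHermitian G))
  refine ⟨part1, ?_⟩
  intro v hv u hadjvu
  obtain ⟨hvr, hva⟩ := hT0 v hv
  have hunR : u ∉ Set.range x := by rintro ⟨i, rfl⟩; exact hva i hadjvu
  have hadjuv : G.Adj u v := hadjvu.symm
  have cons : ∀ i : Fin 4, G.Adj u (x i) → G.Adj u (x (i + 1)) → False :=
    fun i p q => htri u (x i) (x (i + 1)) p q (hcyc i)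
  have hnux : ∀ i, x i ≠ u := fun i h => hunR ⟨i, h⟩
  have hnvx : ∀ i, x i ≠ v := fun i h => hvr ⟨i, h⟩
  have hnva : ∀ i, ¬ G.Adj (x i) v := fun i h => hva i h.symm
  have duv : u ≠ v := hadjuv.ne
  refine ⟨hunR, ?_⟩
  by_cases a0 : G.Adj u (x 0) <;> by_cases a1 : G.Adj u (x 1) <;>
    by_cases a2 : G.Adj u (x 2) <;> by_cases a3 : G.Adj u (x 3)
  · exact (cons 0 a0 a1).elim
  · exact (cons 0 a0 a1).elim
  · exact (cons 0 a0 a1).elim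
  · exact (cons 0 a0 a1).elim
  · exact (cons 3 a3 a0).elim
  · -- {0,2}
    have hset : {i : Fin 4 | G.Adj u (x i)} = {0, 2} := by
      ext i; fin_cases i <;> simp [a0, a1, a2, a3]
    rw [hset]; exact Set.ncard_pair (by decide)
  · exact (cons 3 a3 a0).elim
  · -- {0}
    exact (bridge (pendant_spec G (x 0) (x 1) (x 2) (x 3) u v
      (dx 0 1 (by decide)) (dx 0 2 (by decide)) (dx 0 3 (by decide))
      (dx 1 2 (by decide)) (dx 1 3 (by decide)) (dx 2 3 (by decide))
      (hnux 0) (hnux 1) (hnux 2) (hnux 3)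
      (hnvx 0) (hnvx 1) (hnvx 2) (hnvx 3) duv
      h01 h12 h23 h30 a0.symm hadjuv
      n02 n13
      (fun h => a1 h.symm) (fun h => a2 h.symm) (fun h => a3 h.symm)
      (hnva 0) (hnva 1) (hnva 2) (hnva 3) (adjMatrix_isHermitian G))).elim
  · exact (cons 1 a1 a2).elim
  · exact (cons 1 a1 a2).elim
  · -- {1,3}
    have hset : {i : Fin 4 | G.Adj u (x i)} = {1, 3} := by
      ext i; fin_cases i <;> simp [a0, a1, a2, a3]
    rw [hset]; exact Set.ncard_pair (by decide)
  · -- {1}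
    exact (bridge (pendant_spec G (x 1) (x 2) (x 3) (x 0) u v
      (dx 1 2 (by decide)) (dx 1 3 (by decide)) (dx 1 0 (by decide))
      (dx 2 3 (by decide)) (dx 2 0 (by decide)) (dx 3 0 (by decide))
      (hnux 1) (hnux 2) (hnux 3) (hnux 0)
      (hnvx 1) (hnvx 2) (hnvx 3) (hnvx 0) duv
      h12 h23 h30 h01 a1.symm hadjuv
      n13 m20
      (fun h => a2 h.symm) (fun h => a3 h.symm) (fun h => a0 h.symm)
      (hnva 1) (hnva 2) (hnva 3) (hnva 0) (adjMatrix_isHermitian G))).elim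
  · exact (cons 2 a2 a3).elim
  · -- {2}
    exact (bridge (pendant_spec G (x 2) (x 3) (x 0) (x 1) u v
      (dx 2 3 (by decide)) (dx 2 0 (by decide)) (dx 2 1 (by decide))
      (dx 3 0 (by decide)) (dx 3 1 (by decide)) (dx 0 1 (by decide))
      (hnux 2) (hnux 3) (hnux 0) (hnux 1)
      (hnvx 2) (hnvx 3) (hnvx 0) (hnvx 1) duv
      h23 h30 h01 h12 a2.symm hadjuv
      m20 m31
      (fun h => a3 h.symm) (fun h => a0 h.symm) (fun h => a1 h.symm)
      (hnva 2) (hnva 3) (hnva 0) (hnva 1) (adjMatrix_isHermitian G))).elim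
  · -- {3}
    exact (bridge (pendant_spec G (x 3) (x 0) (x 1) (x 2) u v
      (dx 3 0 (by decide)) (dx 3 1 (by decide)) (dx 3 2 (by decide))
      (dx 0 1 (by decide)) (dx 0 2 (by decide)) (dx 1 2 (by decide))
      (hnux 3) (hnux 0) (hnux 1) (hnux 2)
      (hnvx 3) (hnvx 0) (hnvx 1) (hnvx 2) duv
      h30 h01 h12 h23 a3.symm hadjuv
      m31 n02
      (fun h => a0 h.symm) (fun h => a1 h.symm) (fun h => a2 h.symm)
      (hnva 3) (hnva 0) (hnva 1) (hnva 2) (adjMatrix_isHermitian G))).elim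
  · -- empty : u ∈ T0, contradicts part1
    have huT0 : u ∈ Tdeg G x 0 := by
      refine ⟨hunR, ?_⟩
      have hset : {i : Fin 4 | G.Adj u (x i)} = ∅ := by
        ext i; fin_cases i <;> simp [a0, a1, a2, a3]
      rw [hset]; simp
    exact absurd hadjuv (part1 u huT0 v hv)
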